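/- With the same hypotheses as the previous statement (A = U V_u, B = W V_d, U and W unitary, V = U†W, |(V_u)_{ij}| ≤ (ε_u)_{ij} for i≠j, |(V_u)_{ii}|² ≥ 1 − (δ_u)_{ii}, likewise for V_d), one has, entrywise, |A†B| ≥ √(I − δ_u) |V| √(I − δ_d) − (ε_uᵀ|V| + |V|ε_d + ε_uᵀ|V|ε_d), assuming δ_u, δ_d have diagonal entries in [0,1]. -/
import Mathlib


open Matrix

lemma col_norm_conj_mul (U M : Matrix (Fin 3) (Fin 3) ℂ)
    (hU : U ∈ Matrix.unitaryGroup (Fin 3) ℂ) (i : Fin 3) :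
    ∑ k, ‖(Uᴴ * M) k i‖^2 = ∑ k, ‖M k i‖^2 := by
  have hU1 : U * Uᴴ = 1 := by
    have := (Matrix.mem_unitaryGroup_iff).mp hU
    simpa [Matrix.star_eq_conjTranspose] using this
  have key : (Uᴴ * M)ᴴ * (Uᴴ * M) = Mᴴ * M := by
    rw [conjTranspose_mul, conjTranspose_conjTranspose, mul_assoc, ← mul_assoc U, hU1, one_mul]
  have entry : ∀ (N : Matrix (Fin 3) (Fin 3) ℂ),
      ((Nᴴ * N) i i) = ((∑ k, ‖N k i‖^2 : ℝ) : ℂ) := by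
    intro N
    rw [Matrix.mul_apply]
    push_cast
    refine Finset.sum_congr rfl fun k _ => ?_
    rw [Matrix.conjTranspose_apply, Complex.star_def, Complex.conj_mul']
  have := entry (Uᴴ * M)
  rw [key, entry M] at this
  exact_mod_cast this.symm

/-- Entrywise lower bound for |A†B|:
`|A†B| ≥ √(I−δ_u)|V|√(I−δ_d) − (ε_uᵀ|V| + |V|ε_d + ε_uᵀ|V|ε_d)` where `V = U†W`. -/
theorem approximate_ckm_entrywise_lower_bound
    (A B U W : Matrix (Fin 3) (Fin 3) ℂ)
    (hU : U ∈ Matrix.unitaryGroup (Fin 3) ℂ)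
    (hW : W ∈ Matrix.unitaryGroup (Fin 3) ℂ)
    (hAcol : ∀ j, ∑ i, ‖A i j‖^2 = 1)
    (hBcol : ∀ j, ∑ i, ‖B i j‖^2 = 1)
    (εu εd δu δd : Matrix (Fin 3) (Fin 3) ℝ)
    (hεu0 : ∀ i j, 0 ≤ εu i j) (hεd0 : ∀ i j, 0 ≤ εd i j)
    (hεudiag : ∀ i, εu i i = 0) (hεddiag : ∀ i, εd i i = 0)
    (hδu : ∀ i, 0 ≤ δu i i ∧ δu i i ≤ 1) (hδd : ∀ i, 0 ≤ δd i i ∧ δd i i ≤ 1)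
    (hu : ∀ i j, i ≠ j → ‖(Uᴴ * A) i j‖ ≤ εu i j)
    (hud : ∀ i, 1 - δu i i ≤ ‖(Uᴴ * A) i i‖^2)
    (hd : ∀ i j, i ≠ j → ‖(Wᴴ * B) i j‖ ≤ εd i j)
    (hdd : ∀ i, 1 - δd i i ≤ ‖(Wᴴ * B) i i‖^2) :
    ∀ i j, Real.sqrt (1 - δu i i) * ‖(Uᴴ * W) i j‖ * Real.sqrt (1 - δd j j)
        - (εuᵀ * Matrix.of (fun i j => ‖(Uᴴ * W) i j‖)
            + Matrix.of (fun i j => ‖(Uᴴ * W) i j‖) * εd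
            + εuᵀ * Matrix.of (fun i j => ‖(Uᴴ * W) i j‖) * εd) i j
      ≤ ‖(Aᴴ * B) i j‖ := by
  intro i j
  set Vu := Uᴴ * A with hVu
  set Vd := Wᴴ * B with hVd
  set V := Uᴴ * W with hV
  have hU1 : U * Uᴴ = 1 := by
    have := (Matrix.mem_unitaryGroup_iff).mp hU
    simpa [Matrix.star_eq_conjTranspose] using this
  have hW1 : W * Wᴴ = 1 := by
    have := (Matrix.mem_unitaryGroup_iff).mp hW
    simpa [Matrix.star_eq_conjTranspose] using this
  -- column norms of Vu, Vd
  have hVucol : ∀ c, ∑ k, ‖Vu k c‖^2 = 1 := fun c => by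
    rw [hVu, col_norm_conj_mul U A hU c, hAcol c]
  have hVdcol : ∀ c, ∑ k, ‖Vd k c‖^2 = 1 := fun c => by
    rw [hVd, col_norm_conj_mul W B hW c, hBcol c]
  have hVule : ∀ k c, ‖Vu k c‖ ≤ 1 := by
    intro k c
    have h1 : ‖Vu k c‖^2 ≤ 1 := by
      rw [← hVucol c]
      exact Finset.single_le_sum (fun m _ => sq_nonneg ‖Vu m c‖) (Finset.mem_univ k)
    nlinarith [norm_nonneg (Vu k c)]
  have hVdle : ∀ k c, ‖Vd k c‖ ≤ 1 := by
    intro k c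
    have h1 : ‖Vd k c‖^2 ≤ 1 := by
      rw [← hVdcol c]
      exact Finset.single_le_sum (fun m _ => sq_nonneg ‖Vd m c‖) (Finset.mem_univ k)
    nlinarith [norm_nonneg (Vd k c)]
  -- A†B = Vu† V Vd
  have hAB : Aᴴ * B = Vuᴴ * (V * Vd) := by
    rw [hVu, hVd, hV, conjTranspose_mul, conjTranspose_conjTranspose]
    rw [mul_assoc, mul_assoc, ← mul_assoc W Wᴴ, hW1, one_mul, ← mul_assoc U Uᴴ, hU1, one_mul]
  set f : Fin 3 × Fin 3 → ℂ := fun p => star (Vu p.1 i) * (V p.1 p.2 * Vd p.2 j) with hf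
  have hS : (Aᴴ * B) i j = ∑ p : Fin 3 × Fin 3, f p := by
    rw [hAB, Matrix.mul_apply]
    rw [Fintype.sum_prod_type]
    refine Finset.sum_congr rfl fun k _ => ?_
    rw [Matrix.conjTranspose_apply, Matrix.mul_apply, Finset.mul_sum]
  set a : Fin 3 → ℝ := fun k => if k = i then 1 else εu k i with ha
  set b : Fin 3 → ℝ := fun l => if l = j then 1 else εd l j with hb
  set g : Fin 3 × Fin 3 → ℝ := fun p => a p.1 * ‖V p.1 p.2‖ * b p.2 with hg
  have ha0 : ∀ k, 0 ≤ a k := fun k => by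
    by_cases h : k = i <;> simp [ha, h, hεu0]
  have hb0 : ∀ l, 0 ≤ b l := fun l => by
    by_cases h : l = j <;> simp [hb, h, hεd0]
  have hfg : ∀ p, ‖f p‖ ≤ g p := by
    intro p
    have h1 : ‖Vu p.1 i‖ ≤ a p.1 := by
      by_cases h : p.1 = i
      · simp only [ha, h, if_pos rfl]; subst h; exact hVule p.1 p.1
      · simp only [ha, if_neg h]; exact hu p.1 i h
    have h2 : ‖Vd p.2 j‖ ≤ b p.2 := by
      by_cases h : p.2 = j
      · simp only [hb, h, if_pos rfl]; subst h; exact hVdle p.2 p.2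
      · simp only [hb, if_neg h]; exact hd p.2 j h
    have : ‖f p‖ = ‖Vu p.1 i‖ * ‖V p.1 p.2‖ * ‖Vd p.2 j‖ := by
      simp [hf, norm_mul]; ring
    rw [this]
    show _ ≤ a p.1 * ‖V p.1 p.2‖ * b p.2
    calc ‖Vu p.1 i‖ * ‖V p.1 p.2‖ * ‖Vd p.2 j‖
        ≤ a p.1 * ‖V p.1 p.2‖ * ‖Vd p.2 j‖ :=
          mul_le_mul_of_nonneg_right
            (mul_le_mul_of_nonneg_right h1 (norm_nonneg _)) (norm_nonneg _)
      _ ≤ a p.1 * ‖V p.1 p.2‖ * b p.2 :=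
          mul_le_mul_of_nonneg_left h2 (mul_nonneg (ha0 p.1) (norm_nonneg _))
  -- the main term
  have hmain : Real.sqrt (1 - δu i i) * ‖V i j‖ * Real.sqrt (1 - δd j j) ≤ ‖f (i, j)‖ := by
    have heq : ‖f (i, j)‖ = ‖Vu i i‖ * ‖V i j‖ * ‖Vd j j‖ := by
      simp [hf, norm_mul]; ring
    have h1 : Real.sqrt (1 - δu i i) ≤ ‖Vu i i‖ := by
      have := Real.sqrt_le_sqrt (hud i)
      rwa [Real.sqrt_sq (norm_nonneg _)] at this
    have h2 : Real.sqrt (1 - δd j j) ≤ ‖Vd j j‖ := by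
      have := Real.sqrt_le_sqrt (hdd j)
      rwa [Real.sqrt_sq (norm_nonneg _)] at this
    rw [heq]
    calc Real.sqrt (1 - δu i i) * ‖V i j‖ * Real.sqrt (1 - δd j j)
        ≤ ‖Vu i i‖ * ‖V i j‖ * Real.sqrt (1 - δd j j) :=
          mul_le_mul_of_nonneg_right
            (mul_le_mul_of_nonneg_right h1 (norm_nonneg _)) (Real.sqrt_nonneg _)
      _ ≤ ‖Vu i i‖ * ‖V i j‖ * ‖Vd j j‖ :=
          mul_le_mul_of_nonneg_left h2 (mul_nonneg (norm_nonneg _) (norm_nonneg _))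
  -- sum of g
  have hgsum : ∑ p : Fin 3 × Fin 3, g p
      = (εuᵀ * Matrix.of (fun i j => ‖V i j‖)
          + Matrix.of (fun i j => ‖V i j‖) * εd
          + εuᵀ * Matrix.of (fun i j => ‖V i j‖) * εd) i j + ‖V i j‖ := by
    simp only [Matrix.add_apply, Matrix.mul_apply, Matrix.transpose_apply, Matrix.of_apply,
      Fintype.sum_prod_type, hg, ha, hb]
    fin_cases i <;> fin_cases j <;>
      simp [Fin.sum_univ_three, hεudiag, hεddiag] <;> ring
  have hgij : g (i, j) = ‖V i j‖ := by simp [hg, ha, hb]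
  -- error bound
  have herr : ‖(Aᴴ * B) i j - f (i, j)‖
      ≤ (εuᵀ * Matrix.of (fun i j => ‖V i j‖)
          + Matrix.of (fun i j => ‖V i j‖) * εd
          + εuᵀ * Matrix.of (fun i j => ‖V i j‖) * εd) i j := by
    rw [hS]
    have hsub : ∑ p : Fin 3 × Fin 3, f p - f (i, j)
        = ∑ p ∈ Finset.univ.erase (i, j), f p := by
      rw [eq_comm, Finset.sum_erase_eq_sub (Finset.mem_univ _)]
    rw [hsub]
    calc ‖∑ p ∈ Finset.univ.erase (i, j), f p‖
        ≤ ∑ p ∈ Finset.univ.erase (i, j), ‖f p‖ := norm_sum_le _ _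
      _ ≤ ∑ p ∈ Finset.univ.erase (i, j), g p :=
          Finset.sum_le_sum (fun p _ => hfg p)
      _ = ∑ p : Fin 3 × Fin 3, g p - g (i, j) :=
          Finset.sum_erase_eq_sub (Finset.mem_univ _)
      _ = _ := by rw [hgsum, hgij]; ring
  have htri : ‖f (i, j)‖ - ‖(Aᴴ * B) i j - f (i, j)‖ ≤ ‖(Aᴴ * B) i j‖ := by
    have : ‖f (i, j)‖ ≤ ‖(Aᴴ * B) i j‖ + ‖(Aᴴ * B) i j - f (i, j)‖ := by
      calc ‖f (i, j)‖ = ‖(Aᴴ * B) i j - ((Aᴴ * B) i j - f (i, j))‖ := by ring_nf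
        _ ≤ ‖(Aᴴ * B) i j‖ + ‖(Aᴴ * B) i j - f (i, j)‖ := norm_sub_le _ _
    linarith
  linarith
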